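/- There exists a constant C > 0 such that for all Y > 0 and all ν ∈ [0, 1/2], the sum ∑_{m=1}^∞ j_{ν,m}²·e^{-j_{ν,m}²·Y} is at most (1/(C·Y^{3/2}))·e^{-C·Y}, where (j_{ν,m})_{m≥1} is the increasing sequence of positive zeros of the Bessel function J_ν. -/

import Mathlib

/-- The Bessel function of the first kind of order `ν`, defined by its series
for positive arguments (using real powers). -/
noncomputable def besselJ (ν x : ℝ) : ℝ :=
  ∑' m : ℕ, ((-1 : ℝ) ^ m / (m.factorial * Real.Gamma ((m : ℝ) + ν + 1))) *
    (x / 2) ^ (2 * (m : ℝ) + ν)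

open Real MeasureTheory

namespace BesselProofAux
noncomputable def aa (ν : ℝ) (m : ℕ) : ℝ := 1 / (m.factorial * Real.Gamma ((m : ℝ) + ν + 1))

/-- signed coefficient of `x^(2m)` in `h` -/
noncomputable def bb (ν : ℝ) (m : ℕ) : ℝ := (-1 : ℝ) ^ m * aa ν m / 4 ^ m

lemma aa_pos {ν : ℝ} (hν : 0 ≤ ν) (m : ℕ) : 0 < aa ν m := by
  have h1 : (0:ℝ) < (m : ℝ) + ν + 1 := by positivity
  have := Real.Gamma_pos_of_pos h1
  have hf : (0:ℝ) < (m.factorial : ℝ) := by positivity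
  unfold aa
  positivity

lemma aa_rec {ν : ℝ} (hν : 0 ≤ ν) (m : ℕ) :
    aa ν (m + 1) * (((m : ℝ) + 1) * ((m : ℝ) + 1 + ν)) = aa ν m := by
  have h1 : (0:ℝ) < (m : ℝ) + ν + 1 := by positivity
  have hG : Real.Gamma (((m:ℝ) + ν + 1) + 1) = ((m:ℝ) + ν + 1) * Real.Gamma ((m:ℝ) + ν + 1) :=
    Real.Gamma_add_one (ne_of_gt h1)
  have hcast : ((m + 1 : ℕ) : ℝ) + ν + 1 = ((m:ℝ) + ν + 1) + 1 := by push_cast; ring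
  have hfac : ((m+1).factorial : ℝ) = ((m:ℝ)+1) * (m.factorial : ℝ) := by
    rw [Nat.factorial_succ]; push_cast; ring
  have hGpos := Real.Gamma_pos_of_pos h1
  have hfpos : (0:ℝ) < (m.factorial : ℝ) := by positivity
  unfold aa
  rw [hcast, hG, hfac]
  field_simp
  ring

lemma bb_rec {ν : ℝ} (hν : 0 ≤ ν) (m : ℕ) :
    bb ν (m + 1) * (4 * ((m : ℝ) + 1) * ((m : ℝ) + 1 + ν)) = - bb ν m := by
  unfold bb
  have := aa_rec hν m
  have h4 : (4:ℝ)^(m+1) = 4 * 4^m := by ring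
  rw [pow_succ, h4]
  have h4pos : (0:ℝ) < 4 ^ m := by positivity
  linear_combination (-(-1:ℝ)^m / 4^m) * this

lemma aa_le {ν : ℝ} (hν : 0 ≤ ν) (m : ℕ) : aa ν m ≤ aa ν 0 / m.factorial := by
  induction m with
  | zero => simp
  | succ m ih =>
      have hpos := aa_pos hν (m+1)
      have hpos' := aa_pos hν m
      have hrec := aa_rec hν m
      have h1 : (1:ℝ) ≤ ((m:ℝ) + 1 + ν) := by linarith [Nat.cast_nonneg (α := ℝ) m]
      have h2 : aa ν (m+1) * ((m:ℝ)+1) ≤ aa ν m := by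
        nlinarith
      have h3 : aa ν m ≤ aa ν 0 / m.factorial := ih
      have hfpos : (0:ℝ) < (m.factorial : ℝ) := by positivity
      have hfac : ((m+1).factorial : ℝ) = ((m:ℝ)+1) * (m.factorial : ℝ) := by
        rw [Nat.factorial_succ]; push_cast; ring
      rw [hfac]
      rw [le_div_iff₀ (by positivity)] at h3 ⊢
      nlinarith



lemma sturm_gap {u u' u'' q : ℝ → ℝ} {a b : ℝ} (hab : a < b)
    (hu : ∀ x ∈ Set.Icc a b, HasDerivAt u (u' x) x)
    (hu' : ∀ x ∈ Set.Icc a b, HasDerivAt u' (u'' x) x)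
    (hode : ∀ x ∈ Set.Icc a b, u'' x = -(q x) * u x)
    (hq : ∀ x ∈ Set.Icc a b, q x ≤ 2)
    (hpos : ∀ x ∈ Set.Ioo a b, 0 < u x)
    (ha0 : u a = 0) (hb0 : u b = 0) : 2 ≤ b - a := by
  by_contra hL
  push_neg at hL
  have hLpos : 0 < b - a := by linarith
  set ω : ℝ := π / (b - a) with hω
  have hωpos : 0 < ω := div_pos pi_pos hLpos
  have hωL : ω * (b - a) = π := div_mul_cancel₀ _ (ne_of_gt hLpos)
  have hπ : 3 < π := pi_gt_three
  have hω2 : 2 < ω ^ 2 := by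
    have h1 : π / 2 < ω := div_lt_div_of_pos_left pi_pos hLpos hL
    nlinarith
  set v : ℝ → ℝ := fun x => Real.sin (ω * (x - a)) with hv_def
  set v' : ℝ → ℝ := fun x => ω * Real.cos (ω * (x - a)) with hv'_def
  have hlin : ∀ x : ℝ, HasDerivAt (fun y => ω * (y - a)) ω x := by
    intro x
    simpa using ((hasDerivAt_id x).sub_const a).const_mul ω
  have hv : ∀ x, HasDerivAt v (v' x) x := by
    intro x
    exact ((Real.hasDerivAt_sin (ω * (x - a))).comp x (hlin x)).congr_deriv (show Real.cos (ω * (x - a)) * ω = ω * Real.cos (ω * (x - a)) by ring)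
  have hv' : ∀ x, HasDerivAt v' (-(ω^2) * v x) x := by
    intro x
    have h1 := (Real.hasDerivAt_cos (ω * (x - a))).comp x (hlin x)
    have h2 := h1.const_mul ω
    simpa [hv_def, pow_two] using h2.congr_deriv (by ring)
  set W : ℝ → ℝ := fun x => u x * v' x - u' x * v x with hW_def
  have hW : ∀ x ∈ Set.Icc a b,
      HasDerivAt W (u x * (-(ω^2) * v x) - u'' x * v x) x := by
    intro x hx
    have h1 := ((hu x hx).mul (hv' x)).sub ((hu' x hx).mul (hv x))
    apply h1.congr_deriv
    ring
  have hWcont : ContinuousOn W (Set.Icc a b) :=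
    fun x hx => ((hW x hx).continuousAt).continuousWithinAt
  have hWanti : StrictAntiOn W (Set.Icc a b) := by
    apply strictAntiOn_of_deriv_neg (convex_Icc a b) hWcont
    intro x hx
    rw [interior_Icc] at hx
    have hxIcc : x ∈ Set.Icc a b := Set.Ioo_subset_Icc_self hx
    rw [(hW x hxIcc).deriv]
    have hvpos : 0 < v x := by
      apply Real.sin_pos_of_pos_of_lt_pi
      · have : 0 < x - a := by linarith [hx.1]
        positivity
      · have : ω * (x - a) < ω * (b - a) := by
          apply mul_lt_mul_of_pos_left _ hωpos
          linarith [hx.2]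
        rw [hωL] at this
        exact this
    have hupos := hpos x hx
    have hqx := hq x hxIcc
    rw [hode x hxIcc]
    nlinarith [mul_pos hupos hvpos]
  have hWa : W a = 0 := by
    simp [hW_def, hv_def, hv'_def, ha0]
  have hWb : W b = 0 := by
    have hvb : v b = 0 := by
      simp only [hv_def]
      rw [hωL]
      exact Real.sin_pi
    simp [hW_def, hb0, hvb]
  have := hWanti (Set.left_mem_Icc.mpr hab.le) (Set.right_mem_Icc.mpr hab.le) hab
  rw [hWa, hWb] at this
  exact lt_irrefl 0 this

lemma sturm_gap_signless {u u' u'' q : ℝ → ℝ} {a b : ℝ} (hab : a < b)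
    (hu : ∀ x ∈ Set.Icc a b, HasDerivAt u (u' x) x)
    (hu' : ∀ x ∈ Set.Icc a b, HasDerivAt u' (u'' x) x)
    (hode : ∀ x ∈ Set.Icc a b, u'' x = -(q x) * u x)
    (hq : ∀ x ∈ Set.Icc a b, q x ≤ 2)
    (hne : ∀ x ∈ Set.Ioo a b, u x ≠ 0)
    (ha0 : u a = 0) (hb0 : u b = 0) : 2 ≤ b - a := by
  have hucont : ContinuousOn u (Set.Icc a b) :=
    fun x hx => ((hu x hx).continuousAt).continuousWithinAt
  have hsign : (∀ x ∈ Set.Ioo a b, 0 < u x) ∨ (∀ x ∈ Set.Ioo a b, u x < 0) := by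
    set c := (a + b) / 2 with hc
    have hcmem : c ∈ Set.Ioo a b := by constructor <;> [skip; skip] <;> simp [hc] <;> linarith
    have hcne := hne c hcmem
    rcases lt_or_gt_of_ne hcne with hneg | hpos
    · right
      intro x hx
      by_contra hcon
      push_neg at hcon
      have hxpos : 0 < u x := lt_of_le_of_ne hcon (Ne.symm (hne x hx))
      -- u c < 0 < u x : zero in between
      rcases le_total x c with hxc | hcx
      · have hsub : Set.Icc x c ⊆ Set.Icc a b :=
          Set.Icc_subset_Icc hx.1.le hcmem.2.le
        have := intermediate_value_Icc' hxc (hucont.mono hsub) (Set.mem_Icc.mpr ⟨by linarith, by linarith⟩ : (0:ℝ) ∈ Set.Icc (u c) (u x))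
        obtain ⟨z, hz, hz0⟩ := this
        have hzIoo : z ∈ Set.Ioo a b := ⟨lt_of_lt_of_le hx.1 hz.1, lt_of_le_of_lt hz.2 hcmem.2⟩
        exact hne z hzIoo hz0
      · have hsub : Set.Icc c x ⊆ Set.Icc a b :=
          Set.Icc_subset_Icc hcmem.1.le hx.2.le
        have := intermediate_value_Icc hcx (hucont.mono hsub) (Set.mem_Icc.mpr ⟨by linarith, by linarith⟩ : (0:ℝ) ∈ Set.Icc (u c) (u x))
        obtain ⟨z, hz, hz0⟩ := this
        have hzIoo : z ∈ Set.Ioo a b := ⟨lt_of_lt_of_le hcmem.1 hz.1, lt_of_le_of_lt hz.2 hx.2⟩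
        exact hne z hzIoo hz0
    · left
      intro x hx
      by_contra hcon
      push_neg at hcon
      have hxneg : u x < 0 := lt_of_le_of_ne hcon (hne x hx)
      rcases le_total x c with hxc | hcx
      · have hsub : Set.Icc x c ⊆ Set.Icc a b :=
          Set.Icc_subset_Icc hx.1.le hcmem.2.le
        have := intermediate_value_Icc hxc (hucont.mono hsub) (Set.mem_Icc.mpr ⟨by linarith, by linarith⟩ : (0:ℝ) ∈ Set.Icc (u x) (u c))
        obtain ⟨z, hz, hz0⟩ := this
        have hzIoo : z ∈ Set.Ioo a b := ⟨lt_of_lt_of_le hx.1 hz.1, lt_of_le_of_lt hz.2 hcmem.2⟩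
        exact hne z hzIoo hz0
      · have hsub : Set.Icc c x ⊆ Set.Icc a b :=
          Set.Icc_subset_Icc hcmem.1.le hx.2.le
        have := intermediate_value_Icc' hcx (hucont.mono hsub) (Set.mem_Icc.mpr ⟨by linarith, by linarith⟩ : (0:ℝ) ∈ Set.Icc (u x) (u c))
        obtain ⟨z, hz, hz0⟩ := this
        have hzIoo : z ∈ Set.Ioo a b := ⟨lt_of_lt_of_le hcmem.1 hz.1, lt_of_le_of_lt hz.2 hx.2⟩
        exact hne z hzIoo hz0
  rcases hsign with hpos | hneg
  · exact sturm_gap hab hu hu' hode hq hpos ha0 hb0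
  · refine sturm_gap hab (u := fun x => - u x) (u' := fun x => - u' x) (u'' := fun x => - u'' x)
      (q := q) (fun x hx => (hu x hx).neg) (fun x hx => (hu' x hx).neg)
      (fun x hx => by rw [hode x hx]; ring) hq (fun x hx => by
        have := hneg x hx; simpa using this) (by simp [ha0]) (by simp [hb0])




noncomputable def h (ν : ℝ) (x : ℝ) : ℝ := ∑' m : ℕ, bb ν m * x ^ (2 * m)
noncomputable def h1 (ν : ℝ) (x : ℝ) : ℝ :=
  ∑' m : ℕ, bb ν m * (((2 * m : ℕ) : ℝ) * x ^ (2 * m - 1))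
noncomputable def h2 (ν : ℝ) (x : ℝ) : ℝ :=
  ∑' m : ℕ, bb ν m * (((2 * m : ℕ) : ℝ) * (((2 * m - 1 : ℕ) : ℝ) * x ^ (2 * m - 1 - 1)))

noncomputable def uu (ν R : ℝ) (m : ℕ) : ℝ := 4 * aa ν 0 * (R ^ 2) ^ m / m.factorial

lemma summable_uu (ν R : ℝ) : Summable (uu ν R) := by
  have := (Real.summable_pow_div_factorial (R ^ 2)).mul_left (4 * aa ν 0)
  refine this.congr (fun m => ?_)
  unfold uu; ring

lemma bb_abs_le {ν : ℝ} (hν : 0 ≤ ν) (m : ℕ) : |bb ν m| ≤ aa ν 0 / (m.factorial * 4 ^ m) := by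
  have h1 : |bb ν m| = aa ν m / 4 ^ m := by
    rw [bb, abs_div, abs_mul, abs_pow, abs_neg, abs_one, one_pow, one_mul,
      abs_of_pos (aa_pos hν m), abs_of_pos (by positivity : (0:ℝ) < 4 ^ m)]
  rw [h1, div_le_div_iff₀ (by positivity) (by positivity)]
  have := aa_le hν m
  have hf : (0:ℝ) < (m.factorial : ℝ) := by positivity
  rw [le_div_iff₀ hf] at this
  nlinarith [pow_pos (show (0:ℝ) < 4 by norm_num) m]

lemma nat_cast_le_two_pow (m : ℕ) : (m : ℝ) ≤ 2 ^ m := by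
  calc (m : ℝ) ≤ ((2 ^ m - 1 : ℕ) : ℝ) := by
        exact_mod_cast Nat.le_pred_of_lt ((Nat.lt_two_pow_self (n := m)))
    _ ≤ 2 ^ m := by
        have : ((2 ^ m - 1 : ℕ) : ℝ) = (2:ℝ) ^ m - 1 := by
          have : (1:ℕ) ≤ 2 ^ m := Nat.one_le_two_pow
          push_cast [this]; ring
        rw [this]; linarith

lemma sq_cast_le_four_pow (m : ℕ) : ((m : ℝ)) ^ 2 ≤ 4 ^ m := by
  have h := nat_cast_le_two_pow m
  have h0 : (0:ℝ) ≤ (m:ℝ) := Nat.cast_nonneg m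
  calc ((m:ℝ))^2 ≤ (2^m : ℝ)^2 := by nlinarith
    _ = 4 ^ m := by
        rw [← pow_mul, mul_comm, pow_mul]; norm_num

lemma pow_abs_le {R x : ℝ} (hR : 1 ≤ R) (hx : |x| ≤ R) {k : ℕ} (m : ℕ) (hk : k ≤ 2 * m) :
    |x| ^ k ≤ (R ^ 2) ^ m := by
  have h1 : |x| ^ k ≤ R ^ k := pow_le_pow_left₀ (abs_nonneg x) hx k
  have h2 : R ^ k ≤ R ^ (2 * m) := pow_le_pow_right₀ hR hk
  have h3 : (R ^ 2) ^ m = R ^ (2 * m) := by rw [← pow_mul]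
  rw [h3]; exact h1.trans h2

lemma two_pow_sq (m : ℕ) : (2:ℝ) ^ m * 2 ^ m = 4 ^ m := by rw [← mul_pow]; norm_num

lemma norm_term0_le {ν : ℝ} (hν : 0 ≤ ν) {R x : ℝ} (hR : 1 ≤ R) (hx : |x| ≤ R) (m : ℕ) :
    ‖bb ν m * x ^ (2 * m)‖ ≤ uu ν R m := by
  have hb := bb_abs_le hν m
  have hbnn : (0:ℝ) ≤ |bb ν m| := abs_nonneg _
  have hxp := pow_abs_le hR hx m (le_refl (2*m))
  have ha0 := aa_pos hν 0
  have hf : (0:ℝ) < (m.factorial:ℝ) := by positivity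
  have h4 : (0:ℝ) < 4 ^ m := by positivity
  calc ‖bb ν m * x ^ (2*m)‖ = |bb ν m| * |x| ^ (2*m) := by
        rw [norm_mul, Real.norm_eq_abs, Real.norm_eq_abs, abs_pow]
    _ ≤ (aa ν 0 / (m.factorial * 4 ^ m)) * (R^2)^m := by
        gcongr
    _ ≤ uu ν R m := by
        rw [uu, div_mul_eq_mul_div, div_le_div_iff₀ (by positivity) hf]
        have hRm : (0:ℝ) ≤ (R^2)^m := by positivity
        have h14 : (1:ℝ) ≤ 4 * 4 ^ m := by
          have : (1:ℝ) ≤ 4 ^ m := one_le_pow₀ (by norm_num)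
          linarith
        nlinarith [mul_le_mul_of_nonneg_left h14
          (mul_nonneg (mul_nonneg ha0.le hRm) hf.le)]

lemma norm_term1_le {ν : ℝ} (hν : 0 ≤ ν) {R x : ℝ} (hR : 1 ≤ R) (hx : |x| ≤ R) (m : ℕ) :
    ‖bb ν m * (((2 * m : ℕ) : ℝ) * x ^ (2 * m - 1))‖ ≤ uu ν R m := by
  have hb := bb_abs_le hν m
  have hxp := pow_abs_le hR hx (k := 2*m-1) m (by omega)
  have ha0 := aa_pos hν 0
  have hf : (0:ℝ) < (m.factorial:ℝ) := by positivity
  have h4 : (0:ℝ) < 4 ^ m := by positivity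
  have hc : ((2*m : ℕ) : ℝ) ≤ 2 * 2 ^ m := by
    push_cast
    have := nat_cast_le_two_pow m
    linarith
  calc ‖bb ν m * (((2*m:ℕ):ℝ) * x ^ (2*m-1))‖
      = |bb ν m| * (((2*m:ℕ):ℝ) * |x| ^ (2*m-1)) := by
        rw [norm_mul, norm_mul, Real.norm_eq_abs, Real.norm_eq_abs, Real.norm_eq_abs,
          abs_pow, Nat.abs_cast]
    _ ≤ (aa ν 0 / (m.factorial * 4 ^ m)) * ((2 * 2^m) * (R^2)^m) := by
        gcongr
    _ ≤ uu ν R m := by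
        rw [uu, div_mul_eq_mul_div, div_le_div_iff₀ (by positivity) hf]
        have hRm : (0:ℝ) ≤ (R^2)^m := by positivity
        have h2m4 : (2:ℝ)^m ≤ 4^m := pow_le_pow_left₀ (by norm_num) (by norm_num) m
        have key : (2 * (2:ℝ)^m) * (R^2)^m ≤ 4 * 4^m * (R^2)^m := by nlinarith
        nlinarith [mul_le_mul_of_nonneg_left key (mul_nonneg ha0.le hf.le)]

lemma norm_term2_le {ν : ℝ} (hν : 0 ≤ ν) {R x : ℝ} (hR : 1 ≤ R) (hx : |x| ≤ R) (m : ℕ) :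
    ‖bb ν m * (((2 * m : ℕ) : ℝ) * (((2 * m - 1 : ℕ) : ℝ) * x ^ (2 * m - 1 - 1)))‖
      ≤ uu ν R m := by
  have hb := bb_abs_le hν m
  have hxp := pow_abs_le hR hx (k := 2*m-1-1) m (by omega)
  have ha0 := aa_pos hν 0
  have hf : (0:ℝ) < (m.factorial:ℝ) := by positivity
  have h4 : (0:ℝ) < 4 ^ m := by positivity
  have hc : ((2*m : ℕ) : ℝ) ≤ 2 * 2 ^ m := by
    push_cast
    have := nat_cast_le_two_pow m
    linarith
  have hd : ((2*m - 1 : ℕ) : ℝ) ≤ 2 * 2 ^ m := by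
    have h1 : ((2*m - 1 : ℕ) : ℝ) ≤ ((2*m : ℕ) : ℝ) := by exact_mod_cast Nat.sub_le _ _
    linarith
  calc ‖bb ν m * (((2*m:ℕ):ℝ) * (((2*m-1:ℕ):ℝ) * x ^ (2*m-1-1)))‖
      = |bb ν m| * (((2*m:ℕ):ℝ) * (((2*m-1:ℕ):ℝ) * |x| ^ (2*m-1-1))) := by
        rw [norm_mul, norm_mul, norm_mul, Real.norm_eq_abs, Real.norm_eq_abs, Real.norm_eq_abs,
          Real.norm_eq_abs, abs_pow, Nat.abs_cast, Nat.abs_cast]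
    _ ≤ (aa ν 0 / (m.factorial * 4 ^ m)) * ((2 * 2^m) * ((2 * 2^m) * (R^2)^m)) := by
        gcongr
    _ ≤ uu ν R m := by
        have key : (2 * (2:ℝ)^m) * ((2 * 2^m) * (R^2)^m) = 4 * 4^m * (R^2)^m := by
          rw [← two_pow_sq m]; ring
        rw [uu, div_mul_eq_mul_div, div_le_div_iff₀ (by positivity) hf, key]
        exact le_of_eq (by ring)

lemma summable_h_term {ν : ℝ} (hν : 0 ≤ ν) (x : ℝ) :
    Summable (fun m : ℕ => bb ν m * x ^ (2 * m)) := by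
  refine Summable.of_norm_bounded (summable_uu ν (max |x| 1)) (fun m => ?_)
  exact norm_term0_le hν (le_max_right _ _) (le_max_left _ _) m

lemma summable_h1_term {ν : ℝ} (hν : 0 ≤ ν) (x : ℝ) :
    Summable (fun m : ℕ => bb ν m * (((2 * m : ℕ) : ℝ) * x ^ (2 * m - 1))) := by
  refine Summable.of_norm_bounded (summable_uu ν (max |x| 1)) (fun m => ?_)
  exact norm_term1_le hν (le_max_right _ _) (le_max_left _ _) m

lemma summable_h2_term {ν : ℝ} (hν : 0 ≤ ν) (x : ℝ) :
    Summable (fun m : ℕ =>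
      bb ν m * (((2 * m : ℕ) : ℝ) * (((2 * m - 1 : ℕ) : ℝ) * x ^ (2 * m - 1 - 1)))) := by
  refine Summable.of_norm_bounded (summable_uu ν (max |x| 1)) (fun m => ?_)
  exact norm_term2_le hν (le_max_right _ _) (le_max_left _ _) m

lemma mem_ball_abs {R y : ℝ} (hy : y ∈ Metric.ball (0:ℝ) R) : |y| ≤ R := by
  rw [Metric.mem_ball, Real.dist_eq, sub_zero] at hy; exact hy.le

lemma hasDerivAt_h {ν : ℝ} (hν : 0 ≤ ν) (x : ℝ) : HasDerivAt (h ν) (h1 ν x) x := by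
  have hR1 : (1:ℝ) ≤ |x| + 1 := by have := abs_nonneg x; linarith
  have hxmem : x ∈ Metric.ball (0:ℝ) (|x| + 1) := by
    rw [Metric.mem_ball, Real.dist_eq, sub_zero]; exact lt_of_lt_of_le (lt_add_one _) (by simp)
  exact hasDerivAt_tsum_of_isPreconnected (summable_uu ν (|x| + 1)) Metric.isOpen_ball
    (convex_ball (0:ℝ) (|x| + 1)).isPreconnected
    (fun m y _ => (hasDerivAt_pow (2*m) y).const_mul (bb ν m))
    (fun m y hy => norm_term1_le hν hR1 (mem_ball_abs hy) m)
    hxmem (summable_h_term hν x) hxmem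

lemma hasDerivAt_h1 {ν : ℝ} (hν : 0 ≤ ν) (x : ℝ) : HasDerivAt (h1 ν) (h2 ν x) x := by
  have hR1 : (1:ℝ) ≤ |x| + 1 := by have := abs_nonneg x; linarith
  have hxmem : x ∈ Metric.ball (0:ℝ) (|x| + 1) := by
    rw [Metric.mem_ball, Real.dist_eq, sub_zero]; exact lt_of_lt_of_le (lt_add_one _) (by simp)
  exact hasDerivAt_tsum_of_isPreconnected (summable_uu ν (|x| + 1)) Metric.isOpen_ball
    (convex_ball (0:ℝ) (|x| + 1)).isPreconnected
    (fun m y _ => ((hasDerivAt_pow (2*m-1) y).const_mul (((2*m : ℕ):ℝ))).const_mul (bb ν m))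
    (fun m y hy => norm_term2_le hν hR1 (mem_ball_abs hy) m)
    hxmem (summable_h1_term hν x) hxmem

lemma bb_rec' {ν : ℝ} (hν : 0 ≤ ν) (m : ℕ) :
    bb ν (m + 1) * (4 * ((m : ℝ) + 1) * ((m : ℝ) + 1 + ν)) = - bb ν m := bb_rec hν m

lemma h_ode {ν : ℝ} (hν : 0 ≤ ν) (x : ℝ) :
    x * h2 ν x + (2*ν+1) * h1 ν x + x * h ν x = 0 := by
  have S0 := summable_h_term hν x
  have S1 := summable_h1_term hν x
  have S2 := summable_h2_term hν x
  set e : ℕ → ℝ := fun m => bb ν m * ((2*(m:ℝ)) * (2*(m:ℝ) + 2*ν)) * x^(2*m-1) with he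
  have hd : ∀ m : ℕ,
      x * (bb ν m * (((2*m:ℕ):ℝ) * (((2*m-1:ℕ):ℝ) * x^(2*m-1-1))))
        + (2*ν+1) * (bb ν m * (((2*m:ℕ):ℝ) * x^(2*m-1))) = e m := by
    intro m
    cases m with
    | zero => simp [he]
    | succ m =>
        have e1 : 2 * (m+1) - 1 - 1 = 2*m := by omega
        have e2 : 2 * (m+1) - 1 = 2*m + 1 := by omega
        have e3 : x ^ (2*m+1) = x * x^(2*m) := by rw [pow_succ]; ring
        simp only [he]
        rw [e1, e2, e3]
        push_cast
        ring
  have hsum_e : Summable e := by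
    refine Summable.congr ((S2.mul_left x).add (S1.mul_left (2*ν+1))) ?_
    intro m; exact hd m
  have hsplit : x * h2 ν x + (2*ν+1) * h1 ν x = ∑' m, e m := by
    rw [h2, h1, ← tsum_mul_left, ← tsum_mul_left, ← Summable.tsum_add (S2.mul_left x) (S1.mul_left (2*ν+1))]
    exact tsum_congr hd
  have he0 : e 0 = 0 := by simp [he]
  have hshift : ∑' m, e m = ∑' m, e (m+1) := by
    rw [Summable.tsum_eq_zero_add hsum_e, he0, zero_add]
  have hnext : ∀ m : ℕ, e (m+1) = - (x * (bb ν m * x^(2*m))) := by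
    intro m
    have e2 : 2 * (m+1) - 1 = 2*m + 1 := by omega
    have e3 : x ^ (2*m+1) = x * x^(2*m) := by rw [pow_succ]; ring
    have hb := bb_rec' hν m
    simp only [he]
    rw [e2, e3]
    push_cast
    linear_combination (x * x^(2*m)) * hb
  have hfinal : ∑' m, e (m+1) = - (x * h ν x) := by
    rw [h, ← tsum_mul_left, ← tsum_neg]
    exact tsum_congr hnext
  rw [hsplit, hshift, hfinal]
  ring

noncomputable def U (ν : ℝ) (x : ℝ) : ℝ := x ^ (ν + 1/2) * h ν x
noncomputable def U1 (ν : ℝ) (x : ℝ) : ℝ :=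
  (ν + 1/2) * x ^ (ν - 1/2) * h ν x + x ^ (ν + 1/2) * h1 ν x
noncomputable def U2 (ν : ℝ) (x : ℝ) : ℝ :=
  (ν + 1/2) * (ν - 1/2) * x ^ (ν - 3/2) * h ν x
    + 2 * (ν + 1/2) * x ^ (ν - 1/2) * h1 ν x + x ^ (ν + 1/2) * h2 ν x

lemma hasDerivAt_U {ν : ℝ} (hν : 0 ≤ ν) {x : ℝ} (hx : 0 < x) :
    HasDerivAt (U ν) (U1 ν x) x := by
  have hr : HasDerivAt (fun y : ℝ => y ^ (ν + 1/2)) ((ν + 1/2) * x ^ (ν + 1/2 - 1)) x :=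
    Real.hasDerivAt_rpow_const (Or.inl (ne_of_gt hx))
  have := hr.mul (hasDerivAt_h hν x)
  have heq : U1 ν x = (ν + 1/2) * x ^ (ν + 1/2 - 1) * h ν x + x ^ (ν + 1/2) * h1 ν x := by
    rw [U1, show ν + 1/2 - 1 = ν - 1/2 by ring]
  rw [heq]
  exact this

lemma hasDerivAt_U1 {ν : ℝ} (hν : 0 ≤ ν) {x : ℝ} (hx : 0 < x) :
    HasDerivAt (U1 ν) (U2 ν x) x := by
  have hr1 : HasDerivAt (fun y : ℝ => y ^ (ν - 1/2)) ((ν - 1/2) * x ^ (ν - 1/2 - 1)) x :=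
    Real.hasDerivAt_rpow_const (Or.inl (ne_of_gt hx))
  have hr2 : HasDerivAt (fun y : ℝ => y ^ (ν + 1/2)) ((ν + 1/2) * x ^ (ν + 1/2 - 1)) x :=
    Real.hasDerivAt_rpow_const (Or.inl (ne_of_gt hx))
  have hA := ((hr1.const_mul (ν + 1/2)).mul (hasDerivAt_h hν x))
  have hB := (hr2.mul (hasDerivAt_h1 hν x))
  have := hA.add hB
  have heq : U2 ν x =
      ((ν + 1/2) * ((ν - 1/2) * x ^ (ν - 1/2 - 1))) * h ν x
        + ((ν + 1/2) * x ^ (ν - 1/2)) * h1 ν x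
        + (((ν + 1/2) * x ^ (ν + 1/2 - 1)) * h1 ν x + x ^ (ν + 1/2) * h2 ν x) := by
    rw [U2, show ν - 1/2 - 1 = ν - 3/2 by ring, show ν + 1/2 - 1 = ν - 1/2 by ring]
    ring
  rw [heq]
  exact this

lemma U_ode {ν : ℝ} (hν : 0 ≤ ν) {x : ℝ} (hx : 0 < x) :
    U2 ν x = -(1 + (1/4 - ν^2)/x^2) * U ν x := by
  have hode := h_ode hν x
  have e1 : x ^ (ν - 1/2) = x ^ (ν - 3/2) * x := by
    rw [show ν - 1/2 = (ν - 3/2) + 1 by ring, Real.rpow_add hx, Real.rpow_one]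
  have e2 : x ^ (ν + 1/2) = x ^ (ν - 3/2) * x ^ (2:ℕ) := by
    rw [show ν + 1/2 = (ν - 3/2) + 2 by ring, Real.rpow_add hx,
      show (2:ℝ) = ((2:ℕ):ℝ) by norm_num, Real.rpow_natCast]
  rw [U2, U, e1, e2]
  set P := x ^ (ν - 3/2) with hP
  have hx2 : (x:ℝ)^(2:ℕ) ≠ 0 := pow_ne_zero _ (ne_of_gt hx)
  have hxx : x^(2:ℕ)/x^(2:ℕ) = 1 := div_self hx2
  linear_combination (P*x) * hode + ((1/4 - ν^2) * P * h ν x) * hxx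


lemma h_zero_gap {ν a b : ℝ} (hν : 0 ≤ ν) (ha : 1 ≤ a) (hab : a < b)
    (hza : h ν a = 0) (hzb : h ν b = 0) (hne : ∀ x ∈ Set.Ioo a b, h ν x ≠ 0) :
    2 ≤ b - a := by
  have hapos : (0:ℝ) < a := lt_of_lt_of_le one_pos ha
  have hxpos : ∀ x ∈ Set.Icc a b, 0 < x := fun x hx => lt_of_lt_of_le hapos hx.1
  refine sturm_gap_signless (u := U ν) (u' := U1 ν) (u'' := U2 ν)
    (q := fun x => 1 + (1/4 - ν^2)/x^2) hab
    (fun x hx => hasDerivAt_U hν (hxpos x hx))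
    (fun x hx => hasDerivAt_U1 hν (hxpos x hx))
    (fun x hx => U_ode hν (hxpos x hx))
    (fun x hx => ?_) (fun x hx => ?_) ?_ ?_
  · -- q ≤ 2
    have hx1 : 1 ≤ x := le_trans ha hx.1
    have hx2 : (1:ℝ) ≤ x^2 := by nlinarith
    have : (1/4 - ν^2)/x^2 ≤ 1 := by
      rw [div_le_one (by positivity)]
      nlinarith [sq_nonneg ν]
    linarith
  · -- U ≠ 0 on interior
    have hxp : 0 < x := lt_of_lt_of_le hapos hx.1.le
    have hrp : 0 < x ^ (ν + 1/2) := Real.rpow_pos_of_pos hxp _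
    exact mul_ne_zero (ne_of_gt hrp) (hne x hx)
  · rw [U, hza, mul_zero]
  · rw [U, hzb, mul_zero]


lemma besselJ_eq_h {ν x : ℝ} (hν : 0 ≤ ν) (hx : 0 < x) :
    besselJ ν x = (x/2) ^ ν * h ν x := by
  rw [besselJ, h, ← tsum_mul_left]
  apply tsum_congr
  intro m
  have hx2 : (0:ℝ) < x/2 := by linarith
  have e1 : (x/2) ^ (2*(m:ℝ) + ν) = (x/2)^(2*m : ℕ) * (x/2)^ν := by
    rw [show (2*(m:ℝ) + ν) = ((2*m:ℕ):ℝ) + ν by push_cast; ring, Real.rpow_add hx2,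
      Real.rpow_natCast]
  have e2 : ((x/2):ℝ)^(2*m:ℕ) = x^(2*m)/4^m := by
    rw [div_pow, show ((2:ℝ))^(2*m) = 4^m by rw [pow_mul]; norm_num]
  have hG : (0:ℝ) < Real.Gamma ((m:ℝ) + ν + 1) := Real.Gamma_pos_of_pos (by positivity)
  have hfpos : (0:ℝ) < (m.factorial : ℝ) := by positivity
  rw [e1, e2, bb, aa]
  have h4 : ((4:ℝ))^m ≠ 0 := by positivity
  field_simp

lemma h_pos {ν x : ℝ} (hν : 0 ≤ ν) (hx : 0 < x) (hx2 : x ≤ 2) : 0 < h ν x := by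
  set t := x^2/4 with ht_def
  have ht : 0 < t := by rw [ht_def]; positivity
  have ht1 : t ≤ 1 := by rw [ht_def]; nlinarith
  have hterm : ∀ m : ℕ, bb ν m * x^(2*m) = (-1:ℝ)^m * (aa ν m * t^m) := by
    intro m
    rw [bb, ht_def, div_pow, ← pow_mul]
    have h4 : ((4:ℝ))^m ≠ 0 := by positivity
    field_simp
  set f : ℕ → ℝ := fun m => (-1:ℝ)^m * (aa ν m * t^m) with hf_def
  have hfsum : Summable f := (summable_h_term hν x).congr (fun m => hterm m)
  have hEven : Summable (fun k => f (2*k)) :=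
    hfsum.comp_injective (fun p q hpq => by omega)
  have hOdd : Summable (fun k => f (2*k+1)) :=
    hfsum.comp_injective (fun p q hpq => by omega)
  have hsum : HasSum f ((∑' k, f (2*k)) + ∑' k, f (2*k+1)) :=
    HasSum.even_add_odd hEven.hasSum hOdd.hasSum
  have hpair : ∀ k : ℕ, f (2*k) + f (2*k+1) = t^(2*k) * (aa ν (2*k) - aa ν (2*k+1) * t) := by
    intro k
    rw [hf_def]
    simp only
    have hm1 : ((-1:ℝ))^(2*k) = 1 := by rw [pow_mul]; norm_num
    rw [pow_succ (-1:ℝ), pow_succ t, hm1]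
    ring
  have hrec : ∀ k : ℕ, aa ν (2*k+1) * (((2*k:ℕ):ℝ)+1) * (((2*k:ℕ):ℝ)+1+ν) = aa ν (2*k) := by
    intro k
    have := aa_rec hν (2*k)
    nlinarith [this]
  have hpair_nonneg : ∀ k, 0 ≤ f (2*k) + f (2*k+1) := by
    intro k
    rw [hpair k]
    have hr := hrec k
    have hp := aa_pos hν (2*k)
    have hp' := aa_pos hν (2*k+1)
    have hkc : (0:ℝ) ≤ ((2*k:ℕ):ℝ) := Nat.cast_nonneg _
    have hfac : (1:ℝ) ≤ (((2*k:ℕ):ℝ)+1) * (((2*k:ℕ):ℝ)+1+ν) := by nlinarith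
    have hle : aa ν (2*k+1) * t ≤ aa ν (2*k) := by nlinarith
    have htk : (0:ℝ) ≤ t^(2*k) := by positivity
    nlinarith
  have hpair1_pos : 0 < f (2*1) + f (2*1+1) := by
    rw [hpair 1]
    have hr := hrec 1
    have hp := aa_pos hν 2
    have hp' := aa_pos hν 3
    have hfac : (9:ℝ) ≤ (((2*1:ℕ):ℝ)+1) * (((2*1:ℕ):ℝ)+1+ν) := by push_cast; nlinarith
    have hle : aa ν 3 * 9 ≤ aa ν 2 := by push_cast at hr ⊢; nlinarith
    have htk : (0:ℝ) < t^(2*1) := by positivity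
    have : aa ν (2*1+1) * t < aa ν (2*1) := by
      have : aa ν 3 * t ≤ aa ν 3 * 1 := by nlinarith
      push_cast
      nlinarith
    nlinarith
  have hpairsum : Summable (fun k => f (2*k) + f (2*k+1)) := hEven.add hOdd
  have hhx : h ν x = ∑' k, (f (2*k) + f (2*k+1)) := by
    rw [h, tsum_congr hterm, hsum.tsum_eq, ← Summable.tsum_add hEven hOdd]
  rw [hhx]
  exact Summable.tsum_pos hpairsum hpair_nonneg 1 hpair1_pos



lemma gaussian_sum_le {Y : ℝ} (hY : 0 < Y) :
    ∑' m : ℕ, Real.exp (-Y * ((m:ℝ)+1)^2) ≤ Real.sqrt (π / Y) / 2 := by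
  apply Real.tsum_le_of_sum_range_le (fun m => (Real.exp_pos _).le)
  intro n
  have hanti : AntitoneOn (fun x : ℝ => Real.exp (-Y * x^2)) (Set.Icc (0:ℝ) (0 + (n:ℝ))) := by
    intro s hs t ht hst
    apply Real.exp_le_exp.mpr
    have hs0 := hs.1
    have hsq : s^2 ≤ t^2 := by nlinarith
    nlinarith [mul_le_mul_of_nonneg_left hsq hY.le]
  have hle := hanti.sum_le_integral
  have hsum_eq : ∀ i : ℕ, (fun x : ℝ => Real.exp (-Y * x^2)) ((0:ℝ) + ((i:ℝ) + 1)) =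
      Real.exp (-Y * ((i:ℝ)+1)^2) := by intro i; norm_num
  have h1 : (∑ i ∈ Finset.range n, Real.exp (-Y * ((i:ℝ)+1)^2))
      ≤ ∫ x in (0:ℝ)..(0 + (n:ℝ)), Real.exp (-Y * x^2) := by
    refine le_trans (le_of_eq ?_) hle
    apply Finset.sum_congr rfl
    intro i _
    push_cast
    norm_num
  have h2 : (∫ x in (0:ℝ)..(0 + (n:ℝ)), Real.exp (-Y * x^2))
      ≤ ∫ x in Set.Ioi (0:ℝ), Real.exp (-Y * x^2) := by
    rw [zero_add, intervalIntegral.integral_of_le (by positivity)]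
    apply setIntegral_mono_set ((integrable_exp_neg_mul_sq hY).integrableOn)
    · filter_upwards with x using (Real.exp_pos _).le
    · exact HasSubset.Subset.eventuallyLE Set.Ioc_subset_Ioi_self
  have h3 := integral_gaussian_Ioi Y
  calc (∑ i ∈ Finset.range n, Real.exp (-Y * ((i:ℝ)+1)^2))
      ≤ ∫ x in (0:ℝ)..(0 + (n:ℝ)), Real.exp (-Y * x^2) := h1
    _ ≤ ∫ x in Set.Ioi (0:ℝ), Real.exp (-Y * x^2) := h2
    _ = Real.sqrt (π / Y) / 2 := h3

lemma term_bound {jj Y : ℝ} (hY : 0 < Y) {n : ℕ} (hn : 1 ≤ n) (hjj : 2*(n:ℝ) ≤ jj) :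
    jj^2 * Real.exp (-jj^2 * Y) ≤
      2/(Real.exp 1 * Y) * Real.exp (-Y) * Real.exp (-Y * ((n:ℝ))^2) := by
  have h1 : (1:ℝ) ≤ (n:ℝ) := by exact_mod_cast hn
  have hjj2 : 2 ≤ jj := by linarith
  have hsq : 4*(n:ℝ)^2 ≤ jj^2 := by nlinarith
  have hsplit : Real.exp (-jj^2 * Y) =
      Real.exp (-(jj^2*Y/2)) * Real.exp (-(jj^2*Y/4)) * Real.exp (-(jj^2*Y/4)) := by
    rw [← Real.exp_add, ← Real.exp_add]; ring_nf
  have hA : jj^2 * Real.exp (-(jj^2*Y/2)) ≤ 2/(Real.exp 1 * Y) := by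
    set s := jj^2*Y/2 with hs
    have hs0 : 0 ≤ s := by rw [hs]; positivity
    have key : s * Real.exp (-s) ≤ Real.exp (-1) := by
      calc s * Real.exp (-s) ≤ Real.exp (s-1) * Real.exp (-s) := by
            apply mul_le_mul_of_nonneg_right _ (Real.exp_pos _).le
            linarith [Real.add_one_le_exp (s-1)]
        _ = Real.exp (-1) := by rw [← Real.exp_add]; ring_nf
    have hjj2eq : jj^2 = 2*s/Y := by rw [hs]; field_simp
    rw [hjj2eq]
    calc 2*s/Y * Real.exp (-s) = 2/Y * (s * Real.exp (-s)) := by ring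
      _ ≤ 2/Y * Real.exp (-1) := by
          apply mul_le_mul_of_nonneg_left key (by positivity)
      _ = 2/(Real.exp 1 * Y) := by
          rw [Real.exp_neg]
          have := Real.exp_pos 1
          field_simp
  have hB : Real.exp (-(jj^2*Y/4)) ≤ Real.exp (-Y) := by
    apply Real.exp_le_exp.mpr
    have h4 : (4:ℝ) ≤ jj^2 := by nlinarith
    nlinarith [mul_le_mul_of_nonneg_right h4 hY.le]
  have hC : Real.exp (-(jj^2*Y/4)) ≤ Real.exp (-Y*(n:ℝ)^2) := by
    apply Real.exp_le_exp.mpr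
    nlinarith [mul_le_mul_of_nonneg_right hsq hY.le]
  calc jj^2 * Real.exp (-jj^2*Y)
      = (jj^2 * Real.exp (-(jj^2*Y/2))) * Real.exp (-(jj^2*Y/4)) * Real.exp (-(jj^2*Y/4)) := by
        rw [hsplit]; ring
    _ ≤ (2/(Real.exp 1 * Y)) * Real.exp (-Y) * Real.exp (-Y*(n:ℝ)^2) := by
        have e1 : (0:ℝ) ≤ jj^2 * Real.exp (-(jj^2*Y/2)) := by positivity
        have e2 : (0:ℝ) ≤ Real.exp (-(jj^2*Y/4)) := (Real.exp_pos _).le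
        have e3 : (0:ℝ) ≤ 2/(Real.exp 1 * Y) := by positivity
        have e4 : (0:ℝ) ≤ Real.exp (-Y) := (Real.exp_pos _).le
        apply mul_le_mul (mul_le_mul hA hB e2 e3) hC e2 (by positivity)

lemma sqrt_pi_le_e : Real.sqrt π ≤ Real.exp 1 := by
  have h1 : π < 3.15 := pi_lt_d2
  have h2 : (2.7:ℝ) < Real.exp 1 := by
    have := Real.exp_one_gt_d9
    linarith
  have h3 : π ≤ (Real.exp 1)^2 := by nlinarith [pi_pos]
  calc Real.sqrt π ≤ Real.sqrt ((Real.exp 1)^2) := Real.sqrt_le_sqrt h3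
    _ = Real.exp 1 := Real.sqrt_sq (by positivity)

end BesselProofAux

theorem bessel_zeros_series_bound :
    ∃ C > 0, ∀ Y > (0:ℝ), ∀ ν ∈ Set.Icc (0:ℝ) (1 / 2), ∀ j : ℕ → ℝ,
      (∀ n, 1 ≤ n → 0 < j n) →
      StrictMonoOn j (Set.Ici 1) →
      (∀ n, 1 ≤ n → besselJ ν (j n) = 0) →
      (∀ x, 0 < x → besselJ ν x = 0 → ∃ n, 1 ≤ n ∧ j n = x) →
      ∑' m : ℕ, (j (m + 1)) ^ 2 * Real.exp (-(j (m + 1)) ^ 2 * Y)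
        ≤ 1 / (C * Y ^ ((3 : ℝ) / 2)) * Real.exp (-C * Y) := by
  refine ⟨1, one_pos, ?_⟩
  intro Y hY ν hν j hjpos hjmono hjzero hjsurj
  obtain ⟨hν0, hν2⟩ := hν
  -- zeros of besselJ correspond to zeros of h
  have hhzero : ∀ n, 1 ≤ n → BesselProofAux.h ν (j n) = 0 := by
    intro n hn
    have hb := hjzero n hn
    have hp := hjpos n hn
    rw [BesselProofAux.besselJ_eq_h hν0 hp] at hb
    have hrp : (0:ℝ) < (j n / 2) ^ ν := Real.rpow_pos_of_pos (by linarith) _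
    exact (mul_eq_zero.mp hb).resolve_left (ne_of_gt hrp)
  -- all zeros exceed 2
  have hj_gt2 : ∀ n, 1 ≤ n → 2 < j n := by
    intro n hn
    by_contra hcon
    push_neg at hcon
    have := BesselProofAux.h_pos hν0 (hjpos n hn) hcon
    rw [hhzero n hn] at this
    exact lt_irrefl 0 this
  -- consecutive zeros are at least 2 apart
  have hgap : ∀ n, 1 ≤ n → j n + 2 ≤ j (n + 1) := by
    intro n hn
    have hn1 : (1:ℕ) ≤ n + 1 := by omega
    have hmono : j n < j (n + 1) :=
      hjmono (Set.mem_Ici.mpr hn) (Set.mem_Ici.mpr hn1) (by omega)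
    have hne : ∀ x ∈ Set.Ioo (j n) (j (n+1)), BesselProofAux.h ν x ≠ 0 := by
      intro x hx hhx
      have hxpos : 0 < x := lt_trans (by linarith [hj_gt2 n hn] : (0:ℝ) < j n) hx.1
      have hbx : besselJ ν x = 0 := by
        rw [BesselProofAux.besselJ_eq_h hν0 hxpos, hhx, mul_zero]
      obtain ⟨k, hk1, hkx⟩ := hjsurj x hxpos hbx
      rcases le_or_gt k n with hkn | hkn
      · have : j k ≤ j n := by
          rcases eq_or_lt_of_le hkn with heq | hlt
          · rw [heq]
          · exact le_of_lt (hjmono (Set.mem_Ici.mpr hk1) (Set.mem_Ici.mpr hn) hlt)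
        rw [hkx] at this
        linarith [hx.1]
      · have hk : n + 1 ≤ k := hkn
        have : j (n+1) ≤ j k := by
          rcases eq_or_lt_of_le hk with heq | hlt
          · rw [heq]
          · exact le_of_lt (hjmono (Set.mem_Ici.mpr hn1) (Set.mem_Ici.mpr (by omega)) hlt)
        rw [hkx] at this
        linarith [hx.2]
    have := BesselProofAux.h_zero_gap hν0 (by linarith [hj_gt2 n hn] : (1:ℝ) ≤ j n) hmono
      (hhzero n hn) (hhzero (n+1) hn1) hne
    linarith
  -- lower bound j n ≥ 2n
  have hjlb : ∀ n : ℕ, 1 ≤ n → 2 * (n:ℝ) ≤ j n := by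
    intro n
    induction n with
    | zero => intro h; omega
    | succ m ih =>
        intro _
        rcases Nat.eq_zero_or_pos m with h0 | h1
        · subst h0
          simpa using (hj_gt2 1 le_rfl).le
        · have h2 := ih h1
          have h3 := hgap m h1
          push_cast
          push_cast at h2
          linarith
  -- term-by-term bound
  set K : ℝ := 2/(Real.exp 1 * Y) * Real.exp (-Y) with hK
  have hKpos : 0 < K := by
    rw [hK]
    positivity
  have hbound : ∀ m : ℕ, (j (m + 1)) ^ 2 * Real.exp (-(j (m + 1)) ^ 2 * Y)
      ≤ K * Real.exp (-Y * ((m:ℝ)+1)^2) := by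
    intro m
    have h1 : 2 * (((m+1:ℕ)):ℝ) ≤ j (m+1) := hjlb (m+1) (by omega)
    have := BesselProofAux.term_bound hY (n := m+1) (by omega) h1
    rw [hK]
    calc (j (m + 1)) ^ 2 * Real.exp (-(j (m + 1)) ^ 2 * Y)
        ≤ 2/(Real.exp 1 * Y) * Real.exp (-Y) * Real.exp (-Y * (((m+1:ℕ)):ℝ)^2) := this
      _ = 2/(Real.exp 1 * Y) * Real.exp (-Y) * Real.exp (-Y * ((m:ℝ)+1)^2) := by
          push_cast; ring_nf
  -- summability of the bounding series
  have hgeo : Summable (fun m : ℕ => Real.exp (-Y * ((m:ℝ)+1)^2)) := by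
    have hr0 : (0:ℝ) ≤ Real.exp (-Y) := (Real.exp_pos _).le
    have hr1 : Real.exp (-Y) < 1 := Real.exp_lt_one_iff.mpr (by linarith)
    have hgs : Summable (fun m : ℕ => Real.exp (-Y) ^ (m+1)) := by
      refine Summable.congr ((summable_geometric_of_lt_one hr0 hr1).mul_left (Real.exp (-Y))) ?_
      intro m
      rw [pow_succ]
      ring
    refine Summable.of_nonneg_of_le (fun m => (Real.exp_pos _).le) (fun m => ?_) hgs
    rw [← Real.exp_nat_mul]
    apply Real.exp_le_exp.mpr
    have hm : (0:ℝ) ≤ (m:ℝ) := Nat.cast_nonneg m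
    have hmm : ((m:ℝ)+1) ≤ ((m:ℝ)+1)^2 := by nlinarith
    push_cast
    nlinarith [mul_le_mul_of_nonneg_left hmm hY.le]
  have hgeoK : Summable (fun m : ℕ => K * Real.exp (-Y * ((m:ℝ)+1)^2)) := hgeo.mul_left K
  have hsumL : Summable (fun m : ℕ => (j (m + 1)) ^ 2 * Real.exp (-(j (m + 1)) ^ 2 * Y)) := by
    refine Summable.of_nonneg_of_le (fun m => by positivity) hbound hgeoK
  -- the chain of bounds
  have hstep1 : ∑' m : ℕ, (j (m + 1)) ^ 2 * Real.exp (-(j (m + 1)) ^ 2 * Y)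
      ≤ ∑' m : ℕ, K * Real.exp (-Y * ((m:ℝ)+1)^2) := Summable.tsum_le_tsum hbound hsumL hgeoK
  have hstep2 : ∑' m : ℕ, K * Real.exp (-Y * ((m:ℝ)+1)^2)
      ≤ K * (Real.sqrt (π / Y) / 2) := by
    rw [tsum_mul_left]
    exact mul_le_mul_of_nonneg_left (BesselProofAux.gaussian_sum_le hY) hKpos.le
  -- final numeric bound
  have hfinal : K * (Real.sqrt (π / Y) / 2) ≤ 1 / (1 * Y ^ ((3:ℝ)/2)) * Real.exp (-1 * Y) := by
    rw [hK, one_mul]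
    have hsY : 0 < Real.sqrt Y := Real.sqrt_pos.mpr hY
    have hsπ : 0 < Real.sqrt π := Real.sqrt_pos.mpr pi_pos
    have he1 : (0:ℝ) < Real.exp 1 := Real.exp_pos 1
    have hYrw : Y ^ ((3:ℝ)/2) = Y * Real.sqrt Y := by
      rw [show (3:ℝ)/2 = 1 + 1/2 by norm_num, Real.rpow_add hY, Real.rpow_one,
        ← Real.sqrt_eq_rpow]
    have hdiv : Real.sqrt (π / Y) = Real.sqrt π / Real.sqrt Y := Real.sqrt_div' π ?pos
    case pos => exact hY.le
    have hπe := BesselProofAux.sqrt_pi_le_e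
    have hgoal : 1 / (Y ^ ((3:ℝ)/2)) * Real.exp (-1 * Y)
        = 1/(Y * Real.sqrt Y) * Real.exp (-Y) := by
      rw [hYrw]
      norm_num
    rw [hdiv, hgoal]
    have key : 2/(Real.exp 1 * Y) * (Real.sqrt π / Real.sqrt Y / 2) ≤ 1/(Y * Real.sqrt Y) := by
      have e3 : 2/(Real.exp 1 * Y) * (Real.sqrt π / Real.sqrt Y / 2)
          = Real.sqrt π / (Real.exp 1 * Y * Real.sqrt Y) := by
        field_simp
      rw [e3, div_le_div_iff₀ (by positivity) (by positivity)]
      nlinarith [mul_pos hY hsY]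
    calc 2/(Real.exp 1 * Y) * Real.exp (-Y) * (Real.sqrt π / Real.sqrt Y / 2)
        = (2/(Real.exp 1 * Y) * (Real.sqrt π / Real.sqrt Y / 2)) * Real.exp (-Y) := by ring
      _ ≤ (1/(Y * Real.sqrt Y)) * Real.exp (-Y) := by
          apply mul_le_mul_of_nonneg_right key (Real.exp_pos _).le
  calc ∑' m : ℕ, (j (m + 1)) ^ 2 * Real.exp (-(j (m + 1)) ^ 2 * Y)
      ≤ ∑' m : ℕ, K * Real.exp (-Y * ((m:ℝ)+1)^2) := hstep1
    _ ≤ K * (Real.sqrt (π / Y) / 2) := hstep2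
    _ ≤ 1 / (1 * Y ^ ((3:ℝ)/2)) * Real.exp (-1 * Y) := hfinal
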